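/- Let a ≥ 0 and m ≥ 1 be real numbers. Then the function g(x) = ( |x + a|^m + |x − a|^m )^{2/m} / x² is monotone nonincreasing on (0, ∞). -/

import Mathlib

open scoped Kronecker ComplexOrder
open Matrix

/-- Frobenius (Hilbert–Schmidt) norm ‖A‖₂ = (Tr A†A)^{1/2}. -/
noncomputable def frob {m n : Type*} [Fintype m] [Fintype n] (A : Matrix m n ℂ) : ℝ :=
  Real.sqrt ((Aᴴ * A).trace.re)

/-- ‖Φ‖_{2→2} = sup_{A ≠ 0} ‖Φ(A)‖₂ / ‖A‖₂. -/
noncomputable def norm22 {m m' : Type*} [Fintype m] [Fintype m']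
    (Φ : Matrix m m ℂ →ₗ[ℂ] Matrix m' m' ℂ) : ℝ :=
  sSup {r | ∃ A, A ≠ 0 ∧ r = frob (Φ A) / frob A}

/-- Choi matrix ∑_{j,k} E_{jk} ⊗ Φ(E_{jk}) of a linear map between matrix algebras. -/
noncomputable def choi {m m' : Type*} [Fintype m] [DecidableEq m] [Fintype m']
    (Φ : Matrix m m ℂ →ₗ[ℂ] Matrix m' m' ℂ) : Matrix (m × m') (m × m') ℂ :=
  ∑ j, ∑ k, (Matrix.single j k (1 : ℂ)) ⊗ₖ Φ (Matrix.single j k 1)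

/-- A linear map between matrix algebras is completely positive iff its Choi matrix is
positive semidefinite. -/
def IsCPMap {m m' : Type*} [Fintype m] [DecidableEq m] [Fintype m']
    (Φ : Matrix m m ℂ →ₗ[ℂ] Matrix m' m' ℂ) : Prop :=
  (choi Φ).PosSemidef

/-- Schatten p-norm ‖A‖_p = (Tr |A|^p)^{1/p}, computed through the singular values of A,
i.e. the square roots of the eigenvalues of A†A. -/
noncomputable def schatten {m n : Type*} [Fintype m] [Fintype n] [DecidableEq n]
    (p : ℝ) (A : Matrix m n ℂ) : ℝ :=
  (∑ i, Real.sqrt ((isHermitian_conjTranspose_mul_self A).eigenvalues i) ^ p) ^ (1 / p)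

/-- ν₂(Φ) = sup { ‖Φ(ρ)‖₂ : ρ positive semidefinite, Tr ρ = 1 }. -/
noncomputable def nu2 {m m' : Type*} [Fintype m] [Fintype m']
    (Φ : Matrix m m ℂ →ₗ[ℂ] Matrix m' m' ℂ) : ℝ :=
  sSup {r | ∃ ρ : Matrix m m ℂ, ρ.PosSemidef ∧ ρ.trace = 1 ∧ r = frob (Φ ρ)}

/-- ν_p(Φ) = sup { ‖Φ(ρ)‖_p : ρ positive semidefinite, Tr ρ = 1 }. -/
noncomputable def nup (p : ℝ) {m m' : Type*} [Fintype m] [Fintype m'] [DecidableEq m']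
    (Φ : Matrix m m ℂ →ₗ[ℂ] Matrix m' m' ℂ) : ℝ :=
  sSup {r | ∃ ρ : Matrix m m ℂ, ρ.PosSemidef ∧ ρ.trace = 1 ∧ r = schatten p (Φ ρ)}

/-- The Pauli matrices σ₁, σ₂, σ₃ (indexed by `Fin 3`). -/
noncomputable def pauli : Fin 3 → Matrix (Fin 2) (Fin 2) ℂ :=
  ![!![0, 1; 1, 0], !![0, -Complex.I; Complex.I, 0], !![1, 0; 0, -1]]


private lemma convex_pair {f : ℝ → ℝ} (hf : ConvexOn ℝ (Set.Ici 0) f) {D A u : ℝ}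
    (hD : 0 ≤ D) (h1 : D ≤ u) (h2 : u ≤ A) :
    f u + f (A + D - u) ≤ f A + f D := by
  rcases eq_or_lt_of_le (h1.trans h2) with h | h
  · have hu : u = A := le_antisymm h2 (h ▸ h1)
    have hAD : A = D := h.symm
    rw [hu, hAD]
    ring_nf
    simp
  · have hAD : A - D ≠ 0 := by linarith
    set lam := (A - u) / (A - D) with hlamdef
    set mu := (u - D) / (A - D) with hmudef
    have hlam : 0 ≤ lam := div_nonneg (by linarith) (by linarith)
    have hmu : 0 ≤ mu := div_nonneg (by linarith) (by linarith)
    have hsum : lam + mu = 1 := by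
      rw [hlamdef, hmudef, ← add_div]
      field_simp
      ring
    have hA0 : (0:ℝ) ≤ A := hD.trans (h1.trans h2)
    have key1 := hf.2 (Set.mem_Ici.2 hD) (Set.mem_Ici.2 hA0) hlam hmu hsum
    have key2 := hf.2 (Set.mem_Ici.2 hD) (Set.mem_Ici.2 hA0) hmu hlam (by linarith)
    have e1 : lam • D + mu • A = u := by
      simp only [smul_eq_mul, hlamdef, hmudef]
      field_simp
      ring
    have e2 : mu • D + lam • A = A + D - u := by
      simp only [smul_eq_mul, hlamdef, hmudef]
      field_simp
      ring
    rw [e1] at key1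
    rw [e2] at key2
    simp only [smul_eq_mul] at key1 key2
    have hfin : lam * f D + mu * f A + (mu * f D + lam * f A) = f A + f D := by
      have : lam * f D + mu * f A + (mu * f D + lam * f A)
          = (lam + mu) * (f A + f D) := by ring
      rw [this, hsum, one_mul]
    linarith

private lemma core17 (m : ℝ) (hm : 1 ≤ m) {u s t : ℝ} (hu : 0 ≤ u) (hs : 0 ≤ s)
    (hst : s ≤ t) :
    |u + s| ^ m + |u - s| ^ m ≤ |u + t| ^ m + |u - t| ^ m := by
  have ht : 0 ≤ t := hs.trans hst
  have hm0 : (0:ℝ) ≤ m := by linarith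
  rw [abs_of_nonneg (by linarith : (0:ℝ) ≤ u + s), abs_of_nonneg (by linarith : (0:ℝ) ≤ u + t)]
  set C := |u - s| with hC
  set D := |u - t| with hDdef
  have hC0 : 0 ≤ C := abs_nonneg _
  have hD0 : 0 ≤ D := abs_nonneg _
  have hBA : u + s ≤ u + t := by linarith
  rcases le_total C D with hCD | hDC
  · have h1 : (u + s) ^ m ≤ (u + t) ^ m := Real.rpow_le_rpow (by linarith) hBA hm0
    have h2 : C ^ m ≤ D ^ m := Real.rpow_le_rpow hC0 hCD hm0
    linarith
  · have hCA : C ≤ u + t := by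
      rw [hC, abs_le]
      constructor <;> linarith
    have hCDt : C - D ≤ t - s := by
      have h3 : C - D ≤ |(u - s) - (u - t)| := abs_sub_abs_le_abs_sub _ _
      have h4 : |(u - s) - (u - t)| = t - s := by
        rw [show (u - s) - (u - t) = t - s by ring, abs_of_nonneg (by linarith)]
      linarith
    have hB' : u + s ≤ (u + t) + D - C := by linarith
    have step1 : (u + s) ^ m ≤ ((u + t) + D - C) ^ m :=
      Real.rpow_le_rpow (by linarith) hB' hm0
    have step2 : C ^ m + ((u + t) + D - C) ^ m ≤ (u + t) ^ m + D ^ m :=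
      convex_pair (convexOn_rpow hm) hD0 hDC hCA
    linarith

/-- For a ≥ 0 and m ≥ 1, the function g(x) = (|x+a|^m + |x−a|^m)^{2/m} / x² is
nonincreasing on (0, ∞). -/
theorem stmt17 (a m : ℝ) (ha : 0 ≤ a) (hm : 1 ≤ m) :
    AntitoneOn (fun x : ℝ => (|x + a| ^ m + |x - a| ^ m) ^ (2 / m) / x ^ 2)
      (Set.Ioi 0) := by
  have hm0 : 0 < m := by linarith
  have hm' : m ≠ 0 := hm0.ne'
  intro x hx y hy hxy
  simp only [Set.mem_Ioi] at hx hy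
  simp only
  rw [div_le_div_iff₀ (by positivity) (by positivity)]
  have hxm : (0:ℝ) ≤ x ^ m := Real.rpow_nonneg hx.le m
  have hym : (0:ℝ) ≤ y ^ m := Real.rpow_nonneg hy.le m
  have hSx : (0:ℝ) ≤ |x + a| ^ m + |x - a| ^ m := by positivity
  have hSy : (0:ℝ) ≤ |y + a| ^ m + |y - a| ^ m := by positivity
  have hpow : ∀ z : ℝ, 0 < z → (z : ℝ) ^ (2:ℕ) = (z ^ m) ^ (2 / m) := by
    intro z hz
    rw [← Real.rpow_natCast z 2, ← Real.rpow_mul hz.le]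
    congr 1
    push_cast
    field_simp
  rw [hpow x hx, hpow y hy, ← Real.mul_rpow hSy hxm, ← Real.mul_rpow hSx hym]
  apply Real.rpow_le_rpow (by positivity) _ (by positivity)
  have habs : ∀ z w : ℝ, 0 < z → |w| ^ m * z ^ m = |z * w| ^ m := by
    intro z w hz
    symm
    rw [abs_mul, Real.mul_rpow (abs_nonneg z) (abs_nonneg w), abs_of_pos hz, mul_comm]
  rw [add_mul, add_mul, habs x (y + a) hx, habs x (y - a) hx, habs y (x + a) hy,
    habs y (x - a) hy]
  have key := core17 m hm (u := x * y) (s := x * a) (t := y * a)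
    (by positivity) (by positivity) (mul_le_mul_of_nonneg_right hxy ha)
  have e1 : x * (y + a) = x * y + x * a := by ring
  have e2 : x * (y - a) = x * y - x * a := by ring
  have e3 : y * (x + a) = x * y + y * a := by ring
  have e4 : y * (x - a) = x * y - y * a := by ring
  rw [e1, e2, e3, e4]
  exact key
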